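/- A mutable face of a pseudoline arrangement (a triangular face whose three vertices correspond to consecutive letters s_i s_{i+1} s_i or s_{i+1} s_i s_{i+1} in the reduced word) lies at level i before the braid move and at level i+1 after (respectively i+1 before and i after); consequently, under the braid-move mutation μ_X the weight areas transform by moving the face X from A_i to A_{i+1} (respectively from A_{i+1} to A_i) while all other faces keep their levels. -/
import Mathlib


namespace Braid

variable {n : ℕ}

/-- Faces of the pseudoline arrangement of a word: `Sum.inl t` is the face bounded on the
left by the crossing at position `t` (whose level is the letter at `t`), `Sum.inr l` is
the face unbounded to the left at level `l`. -/
abbrev Face (n : ℕ) := ℕ ⊕ Fin n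

/-- Membership in the weight area `A_l` of level `l`: the left-unbounded face at level `l`
together with all bounded faces at level `l` except the last one (i.e. those bounded faces
at level `l` that are followed by another crossing at level `l`). -/
def InWeightArea (wd : List (Fin n)) (l : Fin n) : Face n → Prop
  | Sum.inr m => m = l
  | Sum.inl t => wd[t]? = some l ∧ ∃ t', t < t' ∧ wd[t']? = some l

/-- The re-identification of faces under a braid move at position `j`: the faces bounded
on the left by the second and third crossing of the braid exchange their indices, and all
other faces are unchanged. -/
def braidSwap (j : ℕ) : Face n → Face n
  | Sum.inl u => Sum.inl (if u = j + 1 then j + 2 else if u = j + 2 then j + 1 else u)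
  | Sum.inr m => Sum.inr m

lemma idx3 (u v : List (Fin n)) (x y z : Fin n) (t : ℕ) :
    (u ++ [x, y, z] ++ v)[t]? =
      if t < u.length then u[t]?
      else if t = u.length then some x
      else if t = u.length + 1 then some y
      else if t = u.length + 2 then some z
      else v[t - (u.length + 3)]? := by
  rcases lt_or_ge t u.length with h | h
  · rw [List.append_assoc, List.getElem?_append, if_pos h, if_pos h]
  · rw [List.append_assoc, List.getElem?_append, if_neg (not_lt.mpr h), if_neg (not_lt.mpr h)]
    obtain ⟨k, rfl⟩ : ∃ k, t = u.length + k := ⟨t - u.length, by omega⟩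
    simp only [Nat.add_sub_cancel_left]
    rcases k with _ | _ | _ | k
    · simp
    · simp
    · simp
    · have : u.length + (k + 3) ≠ u.length := by omega
      have h1 : u.length + (k + 3) ≠ u.length + 1 := by omega
      have h2 : u.length + (k + 3) ≠ u.length + 2 := by omega
      simp only [if_neg this, if_neg h1, if_neg h2]
      rw [List.getElem?_append_right (by simp : ([x,y,z]:List (Fin n)).length ≤ k + 3)]
      simp only [List.length_cons, List.length_nil]
      congr 1
      omega

lemma tail_eq (u v : List (Fin n)) (a b : Fin n) (t : ℕ) (h : u.length + 2 < t) :
    (u ++ [a, b, a] ++ v)[t]? = (u ++ [b, a, b] ++ v)[t]? := by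
  rw [idx3, idx3]
  split_ifs <;> first | rfl | omega

lemma exists_trans (u v : List (Fin n)) (a b : Fin n) (t : ℕ)
    (h1 : t ≠ u.length) (h2 : t ≠ u.length + 1) (h3 : t ≠ u.length + 2) (l : Fin n) :
    (∃ t', t < t' ∧ (u ++ [a, b, a] ++ v)[t']? = some l) →
    ∃ t', t < t' ∧ (u ++ [b, a, b] ++ v)[t']? = some l := by
  rintro ⟨t', htt, hv⟩
  rw [idx3] at hv
  split_ifs at hv with c1 c2 c3 c4
  · exact ⟨t', htt, by rw [idx3, if_pos c1]; exact hv⟩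
  · exact ⟨u.length + 1, by omega, by rw [idx3]; simp only [lt_irrefl]; norm_num; exact Option.some_injective _ hv⟩
  · exact ⟨u.length, by omega, by rw [idx3]; simp only [lt_irrefl]; norm_num; exact Option.some_injective _ hv⟩
  · exact ⟨u.length + 1, by omega, by rw [idx3]; simp only [lt_irrefl]; norm_num; exact Option.some_injective _ hv⟩
  · refine ⟨t', htt, ?_⟩
    rw [idx3, if_neg c1, if_neg c2, if_neg c3, if_neg c4]
    exact hv

lemma aux (u v : List (Fin n)) (a b : Fin n)
    (hab : b.val = a.val + 1 ∨ a.val = b.val + 1) :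
    ((u ++ [a, b, a] ++ v)[u.length]? = some a ∧
      (u ++ [b, a, b] ++ v)[u.length]? = some b) ∧
    ((u ++ [a, b, a] ++ v)[u.length + 1]? = (u ++ [b, a, b] ++ v)[u.length + 2]? ∧
      (u ++ [a, b, a] ++ v)[u.length + 2]? = (u ++ [b, a, b] ++ v)[u.length + 1]? ∧
      ∀ t : ℕ, t ≠ u.length → t ≠ u.length + 1 → t ≠ u.length + 2 →
        (u ++ [a, b, a] ++ v)[t]? = (u ++ [b, a, b] ++ v)[t]?) ∧
    ((InWeightArea (u ++ [a, b, a] ++ v) a (Sum.inl u.length) ↔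
        InWeightArea (u ++ [b, a, b] ++ v) b (Sum.inl u.length)) ∧
      ¬ InWeightArea (u ++ [a, b, a] ++ v) b (Sum.inl u.length) ∧
      ¬ InWeightArea (u ++ [b, a, b] ++ v) a (Sum.inl u.length)) ∧
    (∀ f : ℕ ⊕ Fin n, f ≠ Sum.inl u.length → ∀ l : Fin n,
      (InWeightArea (u ++ [a, b, a] ++ v) l f ↔
        InWeightArea (u ++ [b, a, b] ++ v) l (braidSwap u.length f))) := by
  have hne : a ≠ b := by
    intro e
    rw [e] at hab
    omega
  have hja : (u ++ [a, b, a] ++ v)[u.length]? = some a := by rw [idx3]; simp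
  have hja1 : (u ++ [a, b, a] ++ v)[u.length + 1]? = some b := by
    rw [idx3]; simp only [lt_irrefl]; norm_num
  have hja2 : (u ++ [a, b, a] ++ v)[u.length + 2]? = some a := by
    rw [idx3]; simp only [lt_irrefl]; norm_num
  have hjb : (u ++ [b, a, b] ++ v)[u.length]? = some b := by rw [idx3]; simp
  have hjb1 : (u ++ [b, a, b] ++ v)[u.length + 1]? = some a := by
    rw [idx3]; simp only [lt_irrefl]; norm_num
  have hjb2 : (u ++ [b, a, b] ++ v)[u.length + 2]? = some b := by
    rw [idx3]; simp only [lt_irrefl]; norm_num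
  have hother : ∀ t : ℕ, t ≠ u.length → t ≠ u.length + 1 → t ≠ u.length + 2 →
      (u ++ [a, b, a] ++ v)[t]? = (u ++ [b, a, b] ++ v)[t]? := by
    intro t h1 h2 h3
    rw [idx3, idx3]
    split_ifs <;> first | rfl | omega
  refine ⟨⟨hja, hjb⟩, ⟨by rw [hja1, hjb2], by rw [hja2, hjb1], hother⟩, ⟨?_, ?_, ?_⟩, ?_⟩
  · exact iff_of_true ⟨hja, u.length + 2, by omega, hja2⟩ ⟨hjb, u.length + 2, by omega, hjb2⟩
  · rintro ⟨h1, -⟩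
    rw [hja] at h1
    exact hne (Option.some_injective _ h1)
  · rintro ⟨h1, -⟩
    rw [hjb] at h1
    exact hne.symm (Option.some_injective _ h1)
  · rintro (t | m) hf l
    · have ht : t ≠ u.length := fun e => hf (by rw [e])
      rcases eq_or_ne t (u.length + 1) with rfl | h1
      · have hbs : braidSwap u.length (Sum.inl (u.length + 1) : ℕ ⊕ Fin n) =
            Sum.inl (u.length + 2) := by simp [braidSwap]
        rw [hbs]
        show _ ∧ _ ↔ _ ∧ _
        constructor
        · rintro ⟨hl, t', htt, hv⟩
          rw [hja1] at hl
          refine ⟨by rw [hjb2]; exact hl, ?_⟩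
          rcases eq_or_ne t' (u.length + 2) with rfl | h2
          · rw [hja2, ← hl] at hv
            exact absurd (Option.some_injective _ hv) hne
          · exact ⟨t', by omega, by rw [← tail_eq u v a b t' (by omega)]; exact hv⟩
        · rintro ⟨hl, t', htt, hv⟩
          rw [hjb2] at hl
          refine ⟨by rw [hja1]; exact hl, t', by omega,
            by rw [tail_eq u v a b t' (by omega)]; exact hv⟩
      · rcases eq_or_ne t (u.length + 2) with rfl | h2
        · have hbs : braidSwap u.length (Sum.inl (u.length + 2) : ℕ ⊕ Fin n) =
              Sum.inl (u.length + 1) := by simp [braidSwap]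
          rw [hbs]
          show _ ∧ _ ↔ _ ∧ _
          constructor
          · rintro ⟨hl, t', htt, hv⟩
            rw [hja2] at hl
            exact ⟨by rw [hjb1]; exact hl, t', by omega,
              by rw [← tail_eq u v a b t' (by omega)]; exact hv⟩
          · rintro ⟨hl, t', htt, hv⟩
            rw [hjb1] at hl
            refine ⟨by rw [hja2]; exact hl, ?_⟩
            rcases eq_or_ne t' (u.length + 2) with rfl | h3
            · rw [hjb2, ← hl] at hv
              exact absurd (Option.some_injective _ hv) hne.symm
            · exact ⟨t', by omega, by rw [tail_eq u v a b t' (by omega)]; exact hv⟩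
        · have hbs : braidSwap u.length (Sum.inl t : ℕ ⊕ Fin n) = Sum.inl t := by
            simp [braidSwap, h1, h2]
          rw [hbs]
          show _ ∧ _ ↔ _ ∧ _
          rw [hother t ht h1 h2]
          constructor
          · rintro ⟨hl, he⟩
            exact ⟨hl, exists_trans u v a b t ht h1 h2 l he⟩
          · rintro ⟨hl, he⟩
            exact ⟨hl, exists_trans u v b a t ht h1 h2 l he⟩
    · exact Iff.rfl


/-- **Levels and weight areas under a braid move.** For a braid move
`s_i s_{i±1} s_i ↦ s_{i±1} s_i s_{i±1}` at positions `j, j+1, j+2`, the mutable face `X`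
(bounded on the left by the crossing at position `j`) lies at level `i` before and at
level `i±1` after the move, while all other faces keep their levels (under the face
re-identification `braidSwap`); consequently the weight areas transform by moving `X`
from `A_i` to `A_{i±1}`, all other memberships being preserved. -/
theorem braid_move_weight_areas (u v : List (Fin n)) (a b : Fin n)
    (hab : b.val = a.val + 1 ∨ a.val = b.val + 1) :
    let wd := u ++ [a, b, a] ++ v
    let wd' := u ++ [b, a, b] ++ v
    let j := u.length
    -- the mutable face changes level from `a` to `b`
    (wd[j]? = some a ∧ wd'[j]? = some b) ∧
    -- all other faces keep their levels
    (wd[j+1]? = wd'[j+2]? ∧ wd[j+2]? = wd'[j+1]? ∧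
      ∀ t : ℕ, t ≠ j → t ≠ j + 1 → t ≠ j + 2 → wd[t]? = wd'[t]?) ∧
    -- the face `X` moves from the weight area `A_a` to the weight area `A_b`
    ((InWeightArea wd a (Sum.inl j) ↔ InWeightArea wd' b (Sum.inl j)) ∧
      ¬ InWeightArea wd b (Sum.inl j) ∧ ¬ InWeightArea wd' a (Sum.inl j)) ∧
    -- all other weight-area memberships are preserved
    (∀ f : Face n, f ≠ Sum.inl j → ∀ l : Fin n,
      (InWeightArea wd l f ↔ InWeightArea wd' l (braidSwap j f))) := by
  intro wd wd' j
  exact aux u v a b hab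

end Braid
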